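/- Let σ > 0, R an n×n upper triangular matrix with positive diagonals r_{ii}, and integers ℓ_i < u_i. Define α_i = 1/(u_i-ℓ_i+1), β_i = (u_i-ℓ_i)/(u_i-ℓ_i+1), and for each choice ω ∈ ∏{α_i, β_i}, let Ī(ω_i) = ℝ if ω_i = α_i and Ī(ω_i) = [-1/2,1/2] if ω_i = β_i. Then (det R/((√(2π)σ)ⁿ)) Σ_{ω} (∏_i ω_i) ∫_{Ī(ω_n)}···∫_{Ī(ω_1)} exp(-‖Rξ‖₂²/(2σ²)) dξ_1···dξ_n ≤ ∏_{i=1}^n [α_i + β_i φ_σ(r_{ii})], where φ_σ(ζ) = erf(ζ/(2√2σ)). -/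

import Mathlib

open MeasureTheory Real Finset

/-- The Gauss error function `erf x = (2/√π) ∫_0^x exp(-t²) dt`. -/
noncomputable def erf (x : ℝ) : ℝ :=
  (2 / Real.sqrt Real.pi) * ∫ t in (0 : ℝ)..x, Real.exp (-t ^ 2)

/-- `φ_σ(ζ) = erf (ζ / (2√2 σ))`. -/
noncomputable def phi (σ ζ : ℝ) : ℝ := erf (ζ / (2 * Real.sqrt 2 * σ))


-- basic: the 1-d gaussian with our parametrization
lemma gauss_rw (σ r t : ℝ) : Real.exp (-(r*t)^2 / (2*σ^2)) = Real.exp (-(r^2/(2*σ^2)) * t^2) := by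
  ring_nf

lemma int_univ (σ r : ℝ) (hσ : 0 < σ) (hr : 0 < r) :
    ∫ t : ℝ, Real.exp (-(r*t)^2 / (2*σ^2)) = Real.sqrt (2*Real.pi) * σ / r := by
  simp_rw [gauss_rw]
  rw [integral_gaussian]
  rw [show π / (r^2/(2*σ^2)) = (2*π) * (σ/r)^2 by field_simp]
  rw [Real.sqrt_mul (by positivity), Real.sqrt_sq (by positivity)]
  ring

lemma even_interval (f : ℝ → ℝ) (hf : ∀ s, f (-s) = f s) (hint : ∀ a b : ℝ, IntervalIntegrable f volume a b) (x : ℝ) :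
    ∫ s in (-x)..x, f s = 2 * ∫ s in (0:ℝ)..x, f s := by
  have h1 : ∫ s in (-x)..(0:ℝ), f s = ∫ s in (0:ℝ)..x, f s := by
    have h2 := intervalIntegral.integral_comp_neg (a := 0) (b := x) f
    simp_rw [hf] at h2
    rw [h2]
    norm_num
  rw [← intervalIntegral.integral_add_adjacent_intervals (hint (-x) 0) (hint 0 x), h1]
  ring

lemma int_Icc (σ r : ℝ) (hσ : 0 < σ) (hr : 0 < r) :
    (r / (Real.sqrt (2*Real.pi) * σ)) * ∫ t in Set.Icc (-(1/2):ℝ) (1/2), Real.exp (-(r*t)^2 / (2*σ^2))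
      = phi σ r := by
  have hc : (r / (Real.sqrt 2 * σ)) ≠ 0 := by positivity
  have h0 : ∫ t in Set.Icc (-(1/2):ℝ) (1/2), Real.exp (-(r*t)^2 / (2*σ^2))
      = ∫ t in (-(1/2):ℝ)..(1/2), Real.exp (-(r*t)^2 / (2*σ^2)) := by
    rw [intervalIntegral.integral_of_le (by norm_num), integral_Icc_eq_integral_Ioc]
  have h1 : ∀ t : ℝ, Real.exp (-((r / (Real.sqrt 2 * σ)) * t)^2) = Real.exp (-(r*t)^2 / (2*σ^2)) := by
    intro t
    congr 1
    rw [mul_pow, div_pow, mul_pow, Real.sq_sqrt (by norm_num : (2:ℝ) ≥ 0)]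
    field_simp
  rw [h0]
  simp_rw [← h1]
  rw [intervalIntegral.integral_comp_mul_left (fun s => Real.exp (-s^2)) hc]
  rw [show r / (Real.sqrt 2 * σ) * -(1/2) = -(r / (Real.sqrt 2 * σ) * (1/2)) by ring]
  rw [even_interval (fun s => Real.exp (-s^2)) (by intro s; simp) (by
    intro a b
    exact (Continuous.intervalIntegrable (by continuity) a b)) ((r / (Real.sqrt 2 * σ)) * (1/2))]
  rw [phi, erf]
  rw [show r / (Real.sqrt 2 * σ) * (1/2) = r / (2 * Real.sqrt 2 * σ) by ring]
  have h2 : Real.sqrt (2*π) = Real.sqrt 2 * Real.sqrt π := Real.sqrt_mul (by norm_num) _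
  rw [smul_eq_mul, h2]
  have hπ : Real.sqrt π > 0 := Real.sqrt_pos.mpr Real.pi_pos
  have h2' : Real.sqrt 2 > 0 := by norm_num
  field_simp

lemma shift_univ (σ r c : ℝ) (hr : 0 < r) :
    ∫ t : ℝ, Real.exp (-(r*t + c)^2 / (2*σ^2)) = ∫ t : ℝ, Real.exp (-(r*t)^2 / (2*σ^2)) := by
  have h : ∀ t : ℝ, r*t + c = r*(t + c/r) := by intro t; field_simp
  simp_rw [h]
  exact integral_add_right_eq_self (fun t => Real.exp (-(r*t)^2 / (2*σ^2))) (c/r)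

lemma shift_Icc (σ r c : ℝ) (hσ : 0 < σ) (hr : 0 < r) :
    ∫ t in Set.Icc (-(1/2):ℝ) (1/2), Real.exp (-(r*t + c)^2 / (2*σ^2))
      ≤ ∫ t in Set.Icc (-(1/2):ℝ) (1/2), Real.exp (-(r*t)^2 / (2*σ^2)) := by
  set f : ℝ → ℝ := fun s => Real.exp (-s^2 / (2*σ^2)) with hf
  have hfc : Continuous f := by continuity
  have hfeven : ∀ s, f (-s) = f s := by intro s; simp [hf]
  set Φ : ℝ → ℝ := fun x => ∫ s in (0:ℝ)..x, f s with hΦdef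
  have hΦ : ∀ x, HasDerivAt Φ (f x) x := fun x =>
    intervalIntegral.integral_hasDerivAt_right (hfc.intervalIntegrable _ _)
      hfc.stronglyMeasurable.stronglyMeasurableAtFilter hfc.continuousAt
  set g : ℝ → ℝ := fun x => Φ (x + r/2) - Φ (x - r/2) with hgdef
  have hg : ∀ x, HasDerivAt g (f (x + r/2) - f (x - r/2)) x := by
    intro x
    have h1 : HasDerivAt (fun x : ℝ => Φ (x + r/2)) (f (x + r/2)) x := by
      simpa [Function.comp_def] using (hΦ (x + r/2)).comp x ((hasDerivAt_id x).add_const (r/2))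
    have h2 : HasDerivAt (fun x : ℝ => Φ (x - r/2)) (f (x - r/2)) x := by
      simpa [Function.comp_def] using (hΦ (x - r/2)).comp x ((hasDerivAt_id x).sub_const (r/2))
    exact h1.sub h2
  have hanti : AntitoneOn g (Set.Ici 0) := by
    apply antitoneOn_of_deriv_nonpos (convex_Ici 0)
    · exact fun x _ => ((hg x).differentiableAt).continuousAt.continuousWithinAt
    · exact fun x _ => ((hg x).differentiableAt).differentiableWithinAt
    · intro x hx
      rw [(hg x).deriv]
      rw [interior_Ici] at hx
      have hx' : (0:ℝ) < x := hx
      have h1 : -(x + r/2)^2 ≤ -(x - r/2)^2 := by nlinarith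
      have h2 : -(x + r/2)^2/(2*σ^2) ≤ -(x - r/2)^2/(2*σ^2) := by gcongr
      have h3 := Real.exp_le_exp.mpr h2
      simp only [hf]
      linarith
  have hΦodd : ∀ x, Φ (-x) = -Φ x := by
    intro x
    have h2 := intervalIntegral.integral_comp_neg (a := 0) (b := x) f
    simp_rw [hfeven] at h2
    have h3 : Φ (-x) = -∫ s in (-x)..(0:ℝ), f s := intervalIntegral.integral_symm _ _
    rw [h3]
    rw [show ∫ s in (-x)..(0:ℝ), f s = ∫ s in (-x)..(-0:ℝ), f s by norm_num]
    rw [← h2]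
  have geven : ∀ x, g (-x) = g x := by
    intro x
    simp only [hgdef]
    rw [show -x + r/2 = -(x - r/2) by ring, show -x - r/2 = -(x + r/2) by ring,
      hΦodd, hΦodd]
    ring
  have key : g c ≤ g 0 := by
    rcases le_or_gt 0 c with h|h
    · exact hanti (Set.mem_Ici.mpr le_rfl) (Set.mem_Ici.mpr h) h
    · rw [← geven]
      exact hanti (Set.mem_Ici.mpr le_rfl) (Set.mem_Ici.mpr (by linarith)) (by linarith)
  have conv : ∀ d : ℝ, (∫ t in Set.Icc (-(1/2):ℝ) (1/2), Real.exp (-(r*t + d)^2 / (2*σ^2)))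
      = r⁻¹ * (Φ (d + r/2) - Φ (d - r/2)) := by
    intro d
    rw [integral_Icc_eq_integral_Ioc, ← intervalIntegral.integral_of_le (by norm_num : (-(1/2):ℝ) ≤ 1/2)]
    have hre : (fun t : ℝ => Real.exp (-(r*t + d)^2 / (2*σ^2))) = fun t => f (r*t + d) := rfl
    calc (∫ t in (-(1/2):ℝ)..(1/2), Real.exp (-(r*t + d)^2 / (2*σ^2)))
        = ∫ t in (-(1/2):ℝ)..(1/2), f (r*t + d) := by rw [hre]
      _ = r⁻¹ • ∫ s in (r * -(1/2) + d)..(r * (1/2) + d), f s :=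
          intervalIntegral.integral_comp_mul_add f (ne_of_gt hr) d
      _ = r⁻¹ * ∫ s in (d - r/2)..(d + r/2), f s := by
          rw [show r * -(1/2) + d = d - r/2 by ring, show r * (1/2) + d = d + r/2 by ring,
            smul_eq_mul]
      _ = r⁻¹ * (Φ (d + r/2) - Φ (d - r/2)) := by
          rw [← intervalIntegral.integral_interval_sub_left (hfc.intervalIntegrable _ _)
            (hfc.intervalIntegrable _ _)]
  have conv0 : (∫ t in Set.Icc (-(1/2):ℝ) (1/2), Real.exp (-(r*t)^2 / (2*σ^2)))
      = r⁻¹ * (Φ (0 + r/2) - Φ (0 - r/2)) := by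
    rw [← conv 0]
    norm_num
  rw [conv c, conv0]
  have : g c ≤ g 0 := key
  simp only [hgdef] at this
  apply mul_le_mul_of_nonneg_left _ (by positivity : (0:ℝ) ≤ r⁻¹)
  exact this

lemma gauss_prod_form (n : ℕ) (σ : ℝ) (y : Fin n → ℝ) :
    Real.exp (-(∑ i, (y i)^2) / (2*σ^2)) = ∏ i, Real.exp (-(1/(2*σ^2)) * (y i)^2) := by
  rw [← Real.exp_sum]
  congr 1
  rw [neg_div, Finset.sum_div, ← Finset.sum_neg_distrib]
  apply Finset.sum_congr rfl
  intro i _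
  ring

lemma integrable_gauss_affine (n : ℕ) (σ : ℝ) (hσ : 0 < σ)
    (R : Matrix (Fin n) (Fin n) ℝ) (hdet : R.det ≠ 0) (v : Fin n → ℝ) :
    Integrable (fun ξ : Fin n → ℝ =>
      Real.exp (-(∑ i, (R.mulVec ξ i + v i)^2) / (2*σ^2))) volume := by
  classical
  have hgint : Integrable (fun y : Fin n → ℝ => Real.exp (-(∑ i, (y i)^2) / (2*σ^2))) volume := by
    have h1 : Integrable (fun t : ℝ => Real.exp (-(1/(2*σ^2)) * t^2)) volume :=
      integrable_exp_neg_mul_sq (by positivity)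
    have h2 := Integrable.fintype_prod (E := ℝ) (f := fun (_ : Fin n) (t : ℝ) =>
      Real.exp (-(1/(2*σ^2)) * t^2)) (fun _ => h1)
    simp_rw [gauss_prod_form]
    exact h2
  have htrans : Integrable (fun y : Fin n → ℝ =>
      Real.exp (-(∑ i, ((y + v) i)^2) / (2*σ^2))) volume :=
    hgint.comp_add_right v
  have hlin : Measure.map (Matrix.toLin' R) volume
      = ENNReal.ofReal |R.det⁻¹| • volume := Real.map_matrix_volume_pi_eq_smul_volume_pi hdet
  have hmeas : Measurable (Matrix.toLin' R) := (LinearMap.continuous_on_pi _).measurable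
  have h2 : Integrable (fun y : Fin n → ℝ => Real.exp (-(∑ i, ((y + v) i)^2) / (2*σ^2)))
      (Measure.map (Matrix.toLin' R) volume) := by
    rw [hlin]
    exact htrans.smul_measure (by simp)
  have h3 : Integrable ((fun y : Fin n → ℝ => Real.exp (-(∑ i, ((y + v) i)^2) / (2*σ^2)))
      ∘ (Matrix.toLin' R)) volume :=
    (integrable_map_measure h2.aestronglyMeasurable hmeas.aemeasurable).mp h2
  have h4 : (fun ξ : Fin n → ℝ => Real.exp (-(∑ i, (R.mulVec ξ i + v i)^2) / (2*σ^2)))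
      = (fun y : Fin n → ℝ => Real.exp (-(∑ i, ((y + v) i)^2) / (2*σ^2)))
        ∘ (Matrix.toLin' R) := by
    funext ξ
    simp only [Function.comp_apply, Pi.add_apply, Matrix.toLin'_apply]
  rw [h4]
  exact h3

lemma sum_bool_prod : ∀ (n : ℕ) (a b : Fin n → ℝ),
    ∑ c : Fin n → Bool, ∏ i, (if c i then b i else a i) = ∏ i, (a i + b i) := by
  intro n
  induction n with
  | zero => intro a b; simp
  | succ n ih =>
    intro a b
    rw [← Equiv.sum_comp (Fin.consEquiv (fun _ : Fin (n+1) => Bool))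
      (fun c => ∏ i, (if c i then b i else a i))]
    rw [Fintype.sum_prod_type]
    simp only [Fin.consEquiv_apply]
    have hsplit : ∀ (x : Bool) (c' : Fin n → Bool),
        (∏ i, (if (Fin.cons x c' : Fin (n+1) → Bool) i then b i else a i))
          = (if x then b 0 else a 0) *
            ∏ i : Fin n, (if c' i then b i.succ else a i.succ) := by
      intro x c'
      rw [Fin.prod_univ_succ]
      simp [Fin.cons_succ]
    simp_rw [hsplit]
    rw [Fin.prod_univ_succ]
    simp only [← Finset.mul_sum, ← Finset.sum_mul]
    rw [ih (fun i => a i.succ) (fun i => b i.succ)]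
    simp [add_mul]
    ring

def Sb (b : Bool) : Set ℝ := if b then Set.Icc (-(1/2):ℝ) (1/2) else Set.univ

lemma Sb_meas (b : Bool) : MeasurableSet (Sb b) := by
  cases b <;> simp [Sb]

noncomputable def g1 (σ r : ℝ) (b : Bool) : ℝ :=
  ∫ t in Sb b, Real.exp (-(r*t)^2 / (2*σ^2))

lemma g1_nonneg (σ r : ℝ) (b : Bool) : 0 ≤ g1 σ r b :=
  setIntegral_nonneg (Sb_meas b) (fun _ _ => (Real.exp_pos _).le)

lemma gauss1d_int (σ r d : ℝ) (hσ : 0 < σ) (hr : r ≠ 0) :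
    Integrable (fun t : ℝ => Real.exp (-(r*t + d)^2 / (2*σ^2))) volume := by
  have h0 : Integrable (fun t : ℝ => Real.exp (-(1/(2*σ^2)) * t^2)) volume :=
    integrable_exp_neg_mul_sq (by positivity)
  have h1 : Integrable (fun t : ℝ => Real.exp (-(1/(2*σ^2)) * (t + d)^2)) volume :=
    h0.comp_add_right d
  have h2 := h1.comp_mul_left' hr
  have h3 : (fun t : ℝ => Real.exp (-(1/(2*σ^2)) * (r * t + d)^2))
      = fun t : ℝ => Real.exp (-(r*t + d)^2 / (2*σ^2)) := by
    funext t
    congr 1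
    ring
  rwa [h3] at h2

lemma gauss1d_shift_le (σ r d : ℝ) (hσ : 0 < σ) (hr : 0 < r) (b : Bool) :
    ∫ t in Sb b, Real.exp (-(r*t + d)^2 / (2*σ^2)) ≤ g1 σ r b := by
  cases b with
  | false =>
    rw [g1]
    simp only [Sb, Bool.false_eq_true, if_false, Measure.restrict_univ]
    exact le_of_eq (shift_univ σ r d hr)
  | true =>
    rw [g1]
    simp only [Sb, if_true]
    exact shift_Icc σ r d hσ hr

lemma submatrix_tri {n : ℕ} (R : Matrix (Fin (n+1)) (Fin (n+1)) ℝ) (hR : R.BlockTriangular id) :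
    (R.submatrix Fin.castSucc Fin.castSucc).BlockTriangular id := by
  intro i j h
  exact hR (show (j.castSucc : Fin (n+1)) < i.castSucc from Fin.castSucc_lt_castSucc_iff.mpr h)

lemma snoc_sum {n : ℕ} (R : Matrix (Fin (n+1)) (Fin (n+1)) ℝ) (hR : R.BlockTriangular id)
    (v : Fin (n+1) → ℝ) (t : ℝ) (y : Fin n → ℝ) :
    ∑ i : Fin (n+1), (R.mulVec (Fin.snoc y t) i + v i)^2
      = (∑ j : Fin n, ((R.submatrix Fin.castSucc Fin.castSucc).mulVec y j
          + (R j.castSucc (Fin.last n) * t + v j.castSucc))^2)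
        + (R (Fin.last n) (Fin.last n) * t + v (Fin.last n))^2 := by
  rw [Fin.sum_univ_castSucc]
  congr 1
  · apply Finset.sum_congr rfl
    intro j _
    have : R.mulVec (Fin.snoc y t) j.castSucc
        = (R.submatrix Fin.castSucc Fin.castSucc).mulVec y j + R j.castSucc (Fin.last n) * t := by
      simp only [Matrix.mulVec, dotProduct, Matrix.submatrix_apply]
      rw [Fin.sum_univ_castSucc]
      simp [Fin.snoc_castSucc, Fin.snoc_last]
    rw [this]
    ring
  · have : R.mulVec (Fin.snoc y t) (Fin.last n) = R (Fin.last n) (Fin.last n) * t := by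
      simp only [Matrix.mulVec, dotProduct]
      rw [Fin.sum_univ_castSucc]
      have hz : ∀ j : Fin n, R (Fin.last n) j.castSucc * (Fin.snoc y t : Fin (n+1) → ℝ) j.castSucc = 0 := by
        intro j
        have h0 : R (Fin.last n) j.castSucc = 0 :=
          hR (show (j.castSucc : Fin (n+1)) < Fin.last n from Fin.castSucc_lt_last j)
        rw [h0]
        ring
      rw [Finset.sum_eq_zero (fun j _ => hz j)]
      simp [Fin.snoc_last]
    rw [this]

lemma preim {n : ℕ} (c : Fin (n+1) → Bool) :
    (⇑(MeasurableEquiv.piFinSuccAbove (fun _ : Fin (n+1) => ℝ) (Fin.last n)).symm) ⁻¹'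
      (Set.univ.pi fun i => Sb (c i))
    = (Sb (c (Fin.last n))) ×ˢ (Set.univ.pi fun j : Fin n => Sb (c j.castSucc)) := by
  ext ⟨t, y⟩
  simp only [Set.mem_preimage, Set.mem_pi, Set.mem_univ, forall_true_left, Set.mem_prod,
    MeasurableEquiv.piFinSuccAbove_symm_apply, Fin.insertNthEquiv_apply, Fin.insertNth_last]
  constructor
  · intro h
    refine ⟨?_, fun j => ?_⟩
    · have := h (Fin.last n)
      rwa [Fin.snoc_last] at this
    · have := h j.castSucc
      rwa [Fin.snoc_castSucc] at this
  · rintro ⟨h1, h2⟩ i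
    refine Fin.lastCases ?_ ?_ i
    · rwa [Fin.snoc_last]
    · intro j
      rw [Fin.snoc_castSucc]
      exact h2 j

lemma core : ∀ (n : ℕ) (σ : ℝ), 0 < σ → ∀ (R : Matrix (Fin n) (Fin n) ℝ),
    R.BlockTriangular id → (∀ i, 0 < R i i) → ∀ (v : Fin n → ℝ) (c : Fin n → Bool),
    (∫ ξ in Set.univ.pi (fun i => Sb (c i)),
        Real.exp (-(∑ i, (R.mulVec ξ i + v i)^2) / (2*σ^2)))
      ≤ ∏ i, g1 σ (R i i) (c i) := by
  intro n
  induction n with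
  | zero =>
    intro σ hσ R hR hd v c
    rw [show (Set.univ.pi (fun i : Fin 0 => Sb (c i))) = Set.univ from by ext x; simp]
    simp only [Finset.univ_eq_empty, Finset.sum_empty, neg_zero, zero_div, Real.exp_zero,
      Finset.prod_empty, Measure.restrict_univ]
    rw [integral_const]
    simp [volume_pi, Measure.pi_univ]
    simp [Measure.real, Measure.pi_univ]
  | succ n ih =>
    intro σ hσ R hR hd v c
    have emb := (MeasurableEquiv.piFinSuccAbove (fun _ : Fin (n+1) => ℝ)
      (Fin.last n)).symm.measurableEmbedding
    have mp := (volume_preserving_piFinSuccAbove (fun _ : Fin (n+1) => ℝ) (Fin.last n)).symm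
    have hdet : R.det ≠ 0 := by
      rw [Matrix.det_of_upperTriangular hR]
      exact ne_of_gt (Finset.prod_pos fun i _ => hd i)
    have hFint : Integrable (fun ξ : Fin (n+1) → ℝ =>
        Real.exp (-(∑ i, (R.mulVec ξ i + v i)^2) / (2*σ^2))) volume :=
      integrable_gauss_affine (n+1) σ hσ R hdet v
    have hGint : Integrable ((fun ξ : Fin (n+1) → ℝ =>
        Real.exp (-(∑ i, (R.mulVec ξ i + v i)^2) / (2*σ^2)))
          ∘ ⇑(MeasurableEquiv.piFinSuccAbove (fun _ : Fin (n+1) => ℝ) (Fin.last n)).symm) :=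
      (mp.integrable_comp_emb emb).mpr hFint
    have heq1 : (∫ ξ in Set.univ.pi (fun i => Sb (c i)),
        Real.exp (-(∑ i, (R.mulVec ξ i + v i)^2) / (2*σ^2)))
        = ∫ p in (Sb (c (Fin.last n))) ×ˢ (Set.univ.pi fun j : Fin n => Sb (c j.castSucc)),
            Real.exp (-(∑ i, (R.mulVec
              ((MeasurableEquiv.piFinSuccAbove (fun _ : Fin (n+1) => ℝ) (Fin.last n)).symm p) i
                + v i)^2) / (2*σ^2)) ∂((volume : Measure ℝ).prod (volume : Measure (Fin n → ℝ))) := by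
      rw [← preim c]
      exact (mp.setIntegral_preimage_emb emb _ _).symm
    rw [heq1]
    have hesymm : ∀ (t : ℝ) (y : Fin n → ℝ),
        (MeasurableEquiv.piFinSuccAbove (fun _ : Fin (n+1) => ℝ) (Fin.last n)).symm (t, y)
          = Fin.snoc y t := by
      intro t y
      simp [MeasurableEquiv.piFinSuccAbove_symm_apply, Fin.insertNthEquiv_apply,
        Fin.insertNth_last, Fin.snocEquiv_apply]
      rfl
    have hGon : IntegrableOn (fun p : ℝ × (Fin n → ℝ) =>
        Real.exp (-(∑ i, (R.mulVec
          ((MeasurableEquiv.piFinSuccAbove (fun _ : Fin (n+1) => ℝ) (Fin.last n)).symm p) i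
            + v i)^2) / (2*σ^2)))
        ((Sb (c (Fin.last n))) ×ˢ (Set.univ.pi fun j : Fin n => Sb (c j.castSucc))) :=
      hGint.integrableOn
    rw [setIntegral_prod _ hGon]
    have hfun : ∀ t : ℝ, (fun y : Fin n → ℝ => Real.exp (-(∑ i, (R.mulVec
          ((MeasurableEquiv.piFinSuccAbove (fun _ : Fin (n+1) => ℝ) (Fin.last n)).symm (t, y)) i
            + v i)^2) / (2*σ^2)))
        = fun y : Fin n → ℝ =>
            Real.exp (-(R (Fin.last n) (Fin.last n) * t + v (Fin.last n))^2 / (2*σ^2))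
              * Real.exp (-(∑ j, ((R.submatrix Fin.castSucc Fin.castSucc).mulVec y j
                  + (R j.castSucc (Fin.last n) * t + v j.castSucc))^2) / (2*σ^2)) := by
      intro t
      funext y
      rw [hesymm t y, snoc_sum R hR v t y, ← Real.exp_add]
      congr 1
      ring
    have hinner : ∀ t : ℝ, (∫ y in Set.univ.pi fun j : Fin n => Sb (c j.castSucc),
        Real.exp (-(∑ i, (R.mulVec
          ((MeasurableEquiv.piFinSuccAbove (fun _ : Fin (n+1) => ℝ) (Fin.last n)).symm (t, y)) i
            + v i)^2) / (2*σ^2)))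
        = Real.exp (-(R (Fin.last n) (Fin.last n) * t + v (Fin.last n))^2 / (2*σ^2))
          * ∫ y in Set.univ.pi fun j : Fin n => Sb (c j.castSucc),
              Real.exp (-(∑ j, ((R.submatrix Fin.castSucc Fin.castSucc).mulVec y j
                + (R j.castSucc (Fin.last n) * t + v j.castSucc))^2) / (2*σ^2)) := by
      intro t
      rw [hfun t, integral_const_mul]
    have hinner_le : ∀ t : ℝ, (∫ y in Set.univ.pi fun j : Fin n => Sb (c j.castSucc),
        Real.exp (-(∑ j, ((R.submatrix Fin.castSucc Fin.castSucc).mulVec y j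
          + (R j.castSucc (Fin.last n) * t + v j.castSucc))^2) / (2*σ^2)))
        ≤ ∏ j : Fin n, g1 σ ((R.submatrix Fin.castSucc Fin.castSucc) j j) (c j.castSucc) :=
      fun t => ih σ hσ (R.submatrix Fin.castSucc Fin.castSucc) (submatrix_tri R hR)
        (fun j => by simpa using hd j.castSucc)
        (fun j => R j.castSucc (Fin.last n) * t + v j.castSucc) (fun j => c j.castSucc)
    have hP : (0:ℝ) ≤ ∏ j : Fin n, g1 σ ((R.submatrix Fin.castSucc Fin.castSucc) j j)
        (c j.castSucc) := Finset.prod_nonneg fun j _ => g1_nonneg _ _ _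
    calc (∫ t in Sb (c (Fin.last n)), ∫ y in Set.univ.pi fun j : Fin n => Sb (c j.castSucc),
            Real.exp (-(∑ i, (R.mulVec
              ((MeasurableEquiv.piFinSuccAbove (fun _ : Fin (n+1) => ℝ) (Fin.last n)).symm (t, y)) i
                + v i)^2) / (2*σ^2)))
        ≤ ∫ t in Sb (c (Fin.last n)),
            Real.exp (-(R (Fin.last n) (Fin.last n) * t + v (Fin.last n))^2 / (2*σ^2))
              * ∏ j : Fin n, g1 σ ((R.submatrix Fin.castSucc Fin.castSucc) j j) (c j.castSucc) := by
          apply setIntegral_mono_on ?_ ?_ (Sb_meas _) ?_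
          · have h1 : Integrable (fun p : ℝ × (Fin n → ℝ) =>
                Real.exp (-(∑ i, (R.mulVec
                  ((MeasurableEquiv.piFinSuccAbove (fun _ : Fin (n+1) => ℝ) (Fin.last n)).symm p) i
                    + v i)^2) / (2*σ^2)))
                (((volume : Measure ℝ).restrict (Sb (c (Fin.last n)))).prod
                  ((volume : Measure (Fin n → ℝ)).restrict
                    (Set.univ.pi fun j : Fin n => Sb (c j.castSucc)))) := by
              rw [Measure.prod_restrict]
              exact hGon
            exact h1.integral_prod_left
          · exact ((gauss1d_int σ (R (Fin.last n) (Fin.last n)) (v (Fin.last n)) hσ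
              (ne_of_gt (hd _))).mul_const _).integrableOn
          · intro t _
            rw [hinner t]
            exact mul_le_mul_of_nonneg_left (hinner_le t) (Real.exp_pos _).le
      _ = (∏ j : Fin n, g1 σ ((R.submatrix Fin.castSucc Fin.castSucc) j j) (c j.castSucc))
            * ∫ t in Sb (c (Fin.last n)),
                Real.exp (-(R (Fin.last n) (Fin.last n) * t + v (Fin.last n))^2 / (2*σ^2)) := by
          rw [integral_mul_const, mul_comm]
      _ ≤ (∏ j : Fin n, g1 σ ((R.submatrix Fin.castSucc Fin.castSucc) j j) (c j.castSucc))
            * g1 σ (R (Fin.last n) (Fin.last n)) (c (Fin.last n)) :=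
          mul_le_mul_of_nonneg_left (gauss1d_shift_le σ _ _ hσ (hd _) _) hP
      _ = ∏ i : Fin (n+1), g1 σ (R i i) (c i) := by
          rw [Fin.prod_univ_castSucc]
          simp [Matrix.submatrix_apply]

lemma d_mul_g1 (σ r : ℝ) (hσ : 0 < σ) (hr : 0 < r) (b : Bool) :
    (r / (Real.sqrt (2*Real.pi) * σ)) * g1 σ r b = if b then phi σ r else 1 := by
  cases b with
  | true =>
    simp only [if_true]
    rw [show g1 σ r true = ∫ t in Set.Icc (-(1/2):ℝ) (1/2), Real.exp (-(r*t)^2 / (2*σ^2)) from by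
      simp [g1, Sb]]
    exact int_Icc σ r hσ hr
  | false =>
    simp only [Bool.false_eq_true, if_false]
    rw [show g1 σ r false = ∫ t : ℝ, Real.exp (-(r*t)^2 / (2*σ^2)) from by
      simp [g1, Sb]]
    rw [int_univ σ r hσ hr]
    field_simp

/-- `P_R^BR ≤ P_R^BB`: the success probability of the box-constrained rounding
detector (expanded as a sum over all choices of `ω_i ∈ {α_i, β_i}`, taking the
whole line for `α_i` and `[-1/2,1/2]` for `β_i`) is at most the success
probability of the box-constrained Babai detector. -/
theorem stmt_6 (n : ℕ) (σ : ℝ) (hσ : 0 < σ)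
    (R : Matrix (Fin n) (Fin n) ℝ) (hR : R.BlockTriangular id)
    (hd : ∀ i, 0 < R i i) (l u : Fin n → ℤ) (hlu : ∀ i, l i < u i)
    (α β : Fin n → ℝ)
    (hα : ∀ i, α i = 1 / (((u i - l i : ℤ) : ℝ) + 1))
    (hβ : ∀ i, β i = ((u i - l i : ℤ) : ℝ) / (((u i - l i : ℤ) : ℝ) + 1)) :
    (R.det / (Real.sqrt (2 * Real.pi) * σ) ^ n) *
        ∑ c : Fin n → Bool,
          (∏ i, (if c i then β i else α i)) *
            ∫ ξ in Set.univ.pi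
                (fun i => if c i then Set.Icc (-(1 / 2) : ℝ) (1 / 2)
                  else (Set.univ : Set ℝ)),
              Real.exp (-(∑ i, (R.mulVec ξ i) ^ 2) / (2 * σ ^ 2))
      ≤ ∏ i, (α i + β i * phi σ (R i i)) := by
  classical
  have hd1 : ∀ i, (1:ℝ) ≤ ((u i - l i : ℤ) : ℝ) := by
    intro i
    have := hlu i
    exact_mod_cast (by omega : (1:ℤ) ≤ u i - l i)
  have hαnn : ∀ i, 0 ≤ α i := fun i => by
    rw [hα i]
    have := hd1 i
    positivity
  have hβnn : ∀ i, 0 ≤ β i := fun i => by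
    rw [hβ i]
    have := hd1 i
    positivity
  have hK : R.det / (Real.sqrt (2 * Real.pi) * σ) ^ n
      = ∏ i, (R i i / (Real.sqrt (2*Real.pi) * σ)) := by
    rw [Matrix.det_of_upperTriangular hR, Finset.prod_div_distrib, Finset.prod_const,
      Finset.card_univ, Fintype.card_fin]
  have hKnn : 0 ≤ R.det / (Real.sqrt (2 * Real.pi) * σ) ^ n := by
    rw [hK]
    exact Finset.prod_nonneg fun i _ => div_nonneg (hd i).le (by positivity)
  have hsets : ∀ c : Fin n → Bool,
      (fun i => if c i then Set.Icc (-(1 / 2) : ℝ) (1 / 2) else (Set.univ : Set ℝ))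
        = fun i => Sb (c i) := fun c => rfl
  have hintg : (fun ξ : Fin n → ℝ => Real.exp (-(∑ i, (R.mulVec ξ i) ^ 2) / (2 * σ ^ 2)))
      = fun ξ => Real.exp (-(∑ i, (R.mulVec ξ i + (0:ℝ)) ^ 2) / (2 * σ ^ 2)) := by
    funext ξ
    simp
  have hterm : ∀ c : Fin n → Bool,
      (R.det / (Real.sqrt (2 * Real.pi) * σ) ^ n) *
        ((∏ i, (if c i then β i else α i)) *
          ∫ ξ in Set.univ.pi
              (fun i => if c i then Set.Icc (-(1 / 2) : ℝ) (1 / 2) else (Set.univ : Set ℝ)),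
            Real.exp (-(∑ i, (R.mulVec ξ i) ^ 2) / (2 * σ ^ 2)))
      ≤ ∏ i, (if c i then β i * phi σ (R i i) else α i) := by
    intro c
    have hcore := core n σ hσ R hR hd (fun _ => 0) c
    have h1 : (∫ ξ in Set.univ.pi
          (fun i => if c i then Set.Icc (-(1 / 2) : ℝ) (1 / 2) else (Set.univ : Set ℝ)),
          Real.exp (-(∑ i, (R.mulVec ξ i) ^ 2) / (2 * σ ^ 2)))
        ≤ ∏ i, g1 σ (R i i) (c i) := by
      rw [hsets c]
      simp_rw [hintg]
      exact hcore
    have h2 : (R.det / (Real.sqrt (2 * Real.pi) * σ) ^ n) *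
        (∫ ξ in Set.univ.pi
            (fun i => if c i then Set.Icc (-(1 / 2) : ℝ) (1 / 2) else (Set.univ : Set ℝ)),
          Real.exp (-(∑ i, (R.mulVec ξ i) ^ 2) / (2 * σ ^ 2)))
        ≤ ∏ i, (if c i then phi σ (R i i) else 1) := by
      calc (R.det / (Real.sqrt (2 * Real.pi) * σ) ^ n) * _
          ≤ (R.det / (Real.sqrt (2 * Real.pi) * σ) ^ n) * ∏ i, g1 σ (R i i) (c i) :=
            mul_le_mul_of_nonneg_left h1 hKnn
        _ = ∏ i, ((R i i / (Real.sqrt (2*Real.pi) * σ)) * g1 σ (R i i) (c i)) := by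
            rw [hK, ← Finset.prod_mul_distrib]
        _ = ∏ i, (if c i then phi σ (R i i) else 1) := by
            apply Finset.prod_congr rfl
            intro i _
            exact d_mul_g1 σ (R i i) hσ (hd i) (c i)
    have h3 : 0 ≤ ∏ i, (if c i then β i else α i) :=
      Finset.prod_nonneg fun i _ => by cases hc : c i <;> simp [hαnn i, hβnn i]
    have h4 := mul_le_mul_of_nonneg_left h2 h3
    rw [mul_left_comm]
    refine le_trans h4 (le_of_eq ?_)
    rw [← Finset.prod_mul_distrib]
    apply Finset.prod_congr rfl
    intro i _
    cases hc : c i <;> simp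
  rw [Finset.mul_sum]
  exact le_trans (Finset.sum_le_sum fun c _ => hterm c)
    (le_of_eq (sum_bool_prod n α (fun i => β i * phi σ (R i i))))
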